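/- For every n ≥ 1 there exists a subgroup H of finite index in the integral symplectic group Sp(2n, ℤ) such that H is torsion-free, i.e. the only element of H of finite order is the identity. -/

import Mathlib

open Matrix Finset

section Aux
variable {ι : Type*} [Fintype ι] [DecidableEq ι]

lemma pow_entry_dvd (N : Matrix ι ι ℤ) (d : ℤ) (h : ∀ i j, d ∣ N i j) :
    ∀ m : ℕ, ∀ i j, d ^ (m+1) ∣ (N ^ (m+1)) i j := by
  intro m
  induction m with
  | zero => simpa using h
  | succ m ih =>
    intro i j
    rw [pow_succ (N) (m+1), Matrix.mul_apply]
    refine Finset.dvd_sum fun k _ => ?_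
    rw [pow_succ]
    exact mul_dvd_mul (ih i k) (h k j)

lemma descent (N : Matrix ι ι ℤ) (p : ℕ) (hp : p.Prime) (t : ℕ) (ht : 1 ≤ t)
    (hN : (1 + N) ^ p = 1) (hdvd : ∀ i j, (3:ℤ) ^ t ∣ N i j) :
    ∀ i j, (3:ℤ) ^ (t+1) ∣ N i j := by
  obtain ⟨q, rfl⟩ : ∃ q, p = 2 + q := ⟨p - 2, by have := hp.two_le; omega⟩
  have key := (Commute.one_right N).add_pow (2 + q)
  rw [add_comm N 1] at key
  rw [key] at hN
  simp only [one_pow, mul_one] at hN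
  rw [Finset.sum_range_succ'] at hN
  rw [show 2 + q = (1 + q) + 1 by omega] at hN
  rw [Finset.sum_range_succ'] at hN
  simp only [pow_zero, pow_one, Nat.choose_zero_right, Nat.choose_one_right, Nat.cast_one,
    mul_one, one_mul] at hN
  -- hN : S + N * ↑(p) + 1 = 1
  have hmain : ∀ i j, ((1 + q + 1 : ℕ) : ℤ) * N i j =
      -(∑ k ∈ range (1 + q), (N ^ (k + 1 + 1)) i j * ((1 + q + 1).choose (k + 1 + 1) : ℤ)) := by
    intro i j
    have := congrFun (congrFun hN i) j
    simp only [Matrix.add_apply, Matrix.one_apply, Matrix.sum_apply] at this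
    have hc : ∀ (m c : ℕ), (N ^ m * (c : Matrix ι ι ℤ)) i j = (N ^ m) i j * (c : ℤ) := by
      intro m c
      rw [← Matrix.diagonal_natCast, Matrix.mul_diagonal]
    rw [hc] at this
    simp only [hc] at this
    rw [Nat.choose_one_right] at this
    simp only [zero_add, pow_one] at this ⊢
    linear_combination this
  -- each term of the sum is divisible by 3^(2t)
  have hSdvd : ∀ i j, (3:ℤ) ^ (2 * t) ∣
      ∑ k ∈ range (1 + q), (N ^ (k + 1 + 1)) i j * ((1 + q + 1).choose (k + 1 + 1) : ℤ) := by
    intro i j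
    refine Finset.dvd_sum fun k _ => Dvd.dvd.mul_right ?_ _
    have := pow_entry_dvd N ((3:ℤ)^t) hdvd (k+1) i j
    refine dvd_trans ?_ this
    rw [← pow_mul]
    exact pow_dvd_pow 3 (by nlinarith)
  intro i j
  by_cases h3 : 2 + q = 3
  · -- p = 3 : S = 3 N^2 + N^3
    obtain rfl : q = 1 := by omega
    have he := hmain i j
    rw [Finset.sum_range_succ, Finset.sum_range_one] at he
    norm_num at he
    have d2 : (3:ℤ) ^ (t + 2) ∣ (N ^ 2) i j * 3 := by
      have h1 := pow_entry_dvd N ((3:ℤ)^t) hdvd 1 i j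
      rw [← pow_mul] at h1
      have h2 : (3:ℤ)^(t+2) ∣ 3 ^ (t*2) * 3 := by
        rw [← pow_succ]
        exact pow_dvd_pow 3 (by omega)
      exact h2.trans (mul_dvd_mul_right h1 3)
    have d3 : (3:ℤ) ^ (t + 2) ∣ (N ^ 3) i j := by
      have h1 := pow_entry_dvd N ((3:ℤ)^t) hdvd 2 i j
      rw [← pow_mul] at h1
      exact (pow_dvd_pow 3 (by omega)).trans h1
    have hfin : (3:ℤ) ^ (t+2) ∣ 3 * N i j := by
      rw [he]
      exact (dvd_neg.mpr d3).add (dvd_neg.mpr d2)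
    rw [show t + 2 = (t+1) + 1 by ring, pow_succ'] at hfin
    exact (mul_dvd_mul_iff_left (by norm_num : (3:ℤ) ≠ 0)).mp hfin
  · have hcop : IsCoprime ((3:ℤ)^(t+1)) ((1 + q + 1 : ℕ) : ℤ) := by
      have hco : Nat.Coprime 3 (1 + q + 1) := by
        have := (Nat.coprime_primes Nat.prime_three (by rwa [show 2 + q = 1 + q + 1 by ring] at hp)).mpr (by omega)
        exact this
      exact (Int.isCoprime_iff_gcd_eq_one (m := 3) (n := ((1 + q + 1 : ℕ) : ℤ)) |>.mpr hco).pow_left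
    have hd : (3:ℤ)^(t+1) ∣ ((1 + q + 1 : ℕ) : ℤ) * N i j := by
      rw [hmain i j]
      exact dvd_neg.mpr ((pow_dvd_pow 3 (by omega)).trans (hSdvd i j))
    exact hcop.dvd_of_dvd_mul_left hd

lemma matrix_eq_zero_of_prime_pow (N : Matrix ι ι ℤ) (p : ℕ) (hp : p.Prime)
    (hN : (1 + N) ^ p = 1) (hdvd : ∀ i j, (3:ℤ) ∣ N i j) : N = 0 := by
  have hall : ∀ t : ℕ, 1 ≤ t → ∀ i j, (3:ℤ) ^ t ∣ N i j := by
    intro t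
    induction t with
    | zero => omega
    | succ t ih =>
      intro _ i j
      rcases Nat.eq_zero_or_pos t with rfl | hpos
      · simpa using hdvd i j
      · exact descent N p hp t hpos hN (ih hpos) i j
  ext i j
  simp only [Matrix.zero_apply]
  by_contra ha
  have h1 : (3:ℕ) ^ ((N i j).natAbs) ∣ (N i j).natAbs := by
    have ht1 := hall ((N i j).natAbs) (Int.natAbs_pos.mpr ha) i j
    have ht2 := Int.natAbs_dvd_natAbs.mpr ht1
    simpa [Int.natAbs_pow] using ht2
  have h2 := Nat.le_of_dvd (Int.natAbs_pos.mpr ha) h1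
  have h3 := Nat.lt_pow_self (n := (N i j).natAbs) (by norm_num : 1 < 3)
  omega

lemma gl_eq_one_of_prime_pow (A : GL ι ℤ) (p : ℕ) (hp : p.Prime)
    (hA : A ^ p = 1) (hdvd : ∀ i j, (3:ℤ) ∣ ((A : Matrix ι ι ℤ) - 1) i j) : A = 1 := by
  set N : Matrix ι ι ℤ := (A : Matrix ι ι ℤ) - 1 with hNdef
  have h1 : (1 + N) ^ p = 1 := by
    have := congrArg (Units.val) hA
    rw [Units.val_pow_eq_pow_val] at this
    simpa [hNdef] using this
  have := matrix_eq_zero_of_prime_pow N p hp h1 hdvd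
  ext i j
  have := congrFun (congrFun this i) j
  simp only [hNdef, Matrix.sub_apply, Matrix.zero_apply] at this
  simpa [sub_eq_zero] using this

end Aux

/-- The integral symplectic group `Sp(2n, ℤ)`: invertible `2n × 2n` integer matrices `A`
(indexed by `Fin n ⊕ Fin n`) satisfying `Aᵀ * J * A = J`, where
`J = [[0, Iₙ], [-Iₙ, 0]]` is the standard skew-symmetric form. -/
def SpZ (n : ℕ) : Subgroup (GL (Fin n ⊕ Fin n) ℤ) where
  carrier := {A | (↑A : Matrix (Fin n ⊕ Fin n) (Fin n ⊕ Fin n) ℤ)ᵀ *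
      fromBlocks 0 1 (-1) 0 * (↑A : Matrix (Fin n ⊕ Fin n) (Fin n ⊕ Fin n) ℤ) =
      fromBlocks 0 1 (-1) 0}
  one_mem' := by simp
  mul_mem' := by
    intro a b ha hb
    simp only [Set.mem_setOf_eq, Units.val_mul, transpose_mul] at *
    calc (↑b : Matrix (Fin n ⊕ Fin n) (Fin n ⊕ Fin n) ℤ)ᵀ * (↑a)ᵀ *
          fromBlocks 0 1 (-1) 0 * (↑a * ↑b)
        = (↑b)ᵀ * ((↑a)ᵀ * fromBlocks 0 1 (-1) 0 * ↑a) * ↑b := by noncomm_ring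
      _ = (↑b)ᵀ * fromBlocks 0 1 (-1) 0 * ↑b := by rw [ha]
      _ = fromBlocks 0 1 (-1) 0 := hb
  inv_mem' := by
    intro a ha
    simp only [Set.mem_setOf_eq] at *
    calc (↑a⁻¹ : Matrix (Fin n ⊕ Fin n) (Fin n ⊕ Fin n) ℤ)ᵀ * fromBlocks 0 1 (-1) 0 * ↑a⁻¹
        = (↑a⁻¹)ᵀ * ((↑a)ᵀ * fromBlocks 0 1 (-1) 0 * ↑a) * ↑a⁻¹ := by rw [ha]
      _ = ((↑a * ↑a⁻¹ : Matrix (Fin n ⊕ Fin n) (Fin n ⊕ Fin n) ℤ))ᵀ * fromBlocks 0 1 (-1) 0 *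
          (↑a * ↑a⁻¹) := by rw [transpose_mul]; noncomm_ring
      _ = fromBlocks 0 1 (-1) 0 := by rw [Units.mul_inv]; simp

/-- Borel's theorem for `Sp(2n, ℤ)`, `n ≥ 1`: there is a torsion-free subgroup `H` of
finite index in the integral symplectic group, i.e. the only element of `H` of finite
order is the identity. -/
theorem exists_torsionFree_finiteIndex_subgroup_symplectic (n : ℕ) (hn : 1 ≤ n) :
    ∃ H : Subgroup (SpZ n), H.FiniteIndex ∧
      ∀ x ∈ H, ∀ k : ℕ, 1 ≤ k → x ^ k = 1 → x = 1 := by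

  classical
  let f : SpZ n →* GL (Fin n ⊕ Fin n) (ZMod 3) :=
    (Matrix.GeneralLinearGroup.map (Int.castRingHom (ZMod 3))).comp (SpZ n).subtype
  refine ⟨f.ker, ?_, ?_⟩
  · exact Subgroup.finiteIndex_ker f
  · intro x hx k hk1 hxk
    by_contra hne
    have hfin : IsOfFinOrder x := isOfFinOrder_iff_pow_eq_one.mpr ⟨k, by omega, hxk⟩
    set d := orderOf x with hd
    have hd0 : 0 < d := hfin.orderOf_pos
    have hd1 : d ≠ 1 := fun h => hne (orderOf_eq_one_iff.mp h)
    set p := d.minFac with hpdef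
    have hp : p.Prime := Nat.minFac_prime hd1
    set y : SpZ n := x ^ (d / p) with hy
    have hymem : y ∈ f.ker := f.ker.pow_mem hx _
    have hyp : y ^ p = 1 := by
      rw [hy, ← pow_mul, Nat.div_mul_cancel (Nat.minFac_dvd d), hd, pow_orderOf_eq_one]
    -- entries of y are ≡ 1 mod 3
    have hdvd : ∀ i j, (3:ℤ) ∣ (((y : SpZ n) : GL (Fin n ⊕ Fin n) ℤ).val - 1) i j := by
      intro i j
      have h1 : f y = 1 := hymem
      have h2 : (↑(f y) : Matrix (Fin n ⊕ Fin n) (Fin n ⊕ Fin n) (ZMod 3)) = 1 := by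
        rw [h1]; rfl
      have h3 := congrFun (congrFun h2 i) j
      simp only [f, MonoidHom.comp_apply, Matrix.GeneralLinearGroup.map,
        Units.coe_map, RingHom.toMonoidHom_eq_coe, MonoidHom.coe_coe,
        RingHom.mapMatrix_apply, Matrix.map_apply, Matrix.one_apply] at h3
      replace h3 : ((((y : GL (Fin n ⊕ Fin n) ℤ) : Matrix (Fin n ⊕ Fin n) (Fin n ⊕ Fin n) ℤ) i j : ℤ) : ZMod 3) = if i = j then 1 else 0 := h3
      have h4 : (((((y : GL (Fin n ⊕ Fin n) ℤ) : Matrix (Fin n ⊕ Fin n) (Fin n ⊕ Fin n) ℤ) - 1) i j : ℤ) : ZMod 3) = 0 := by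
        rw [Matrix.sub_apply, Int.cast_sub, h3]
        simp only [Matrix.one_apply, apply_ite (Int.cast : ℤ → ZMod 3), Int.cast_one, Int.cast_zero]
        split <;> simp
      exact_mod_cast (ZMod.intCast_zmod_eq_zero_iff_dvd _ 3).mp h4
    have hy1 : ((y : SpZ n) : GL (Fin n ⊕ Fin n) ℤ) = 1 :=
      gl_eq_one_of_prime_pow _ p hp (by
        have := congrArg (fun z : SpZ n => (z : GL (Fin n ⊕ Fin n) ℤ)) hyp
        simpa using this) hdvd
    have hyone : y = 1 := Subtype.ext (by exact_mod_cast hy1)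
    -- x ^ (d / p) = 1 with 0 < d / p < d contradicts minimality of the order
    have hdvd' : d ∣ d / p := orderOf_dvd_of_pow_eq_one (by rw [← hy]; exact hyone)
    have hlt : d / p < d := Nat.div_lt_self hd0 hp.one_lt
    have hpos : 0 < d / p := Nat.div_pos (Nat.minFac_le hd0) (Nat.minFac_pos d)
    exact absurd (Nat.le_of_dvd hpos hdvd') (by omega)
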